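/- Let n ≥ 1 be an integer and let x, y, z ≥ 0 be real numbers satisfying ∫_x^∞ e^{-t} t^{n−1} dt ≤ (1/2)·(n−1)!, ∫_0^y e^{-t} t^{n−1} dt ≥ (1/2)·(n−1)!, and ∫_x^∞ e^{-t} t^{n−1} dt + ∫_0^y e^{-t} t^{n−1} dt = ∫_0^z e^{-t} t^{n−1} dt. Then e^{-x} x^{n−1} + e^{-y} y^{n−1} ≥ e^{-z} z^{n−1}. -/

import Mathlib

open MeasureTheory Real Set

private lemma core_ineq (u : ℝ) (hu : 0 ≤ u) : (1 - u) * Real.exp (2 * u) ≤ 1 + u := by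
  set g : ℝ → ℝ := fun v => 1 + v - (1 - v) * Real.exp (2 * v) with hg
  have hd : ∀ v : ℝ, HasDerivAt g (1 - (1 - 2 * v) * Real.exp (2 * v)) v := by
    intro v
    have h1 : HasDerivAt (fun w : ℝ => Real.exp (2 * w)) (Real.exp (2 * v) * 2) v := by
      simpa using ((hasDerivAt_id v).const_mul 2).exp
    have h2 : HasDerivAt (fun w : ℝ => 1 - w) (-1) v := by
      simpa using (hasDerivAt_id' v).const_sub (1:ℝ)
    have h3 := h2.fun_mul h1
    have h4 : HasDerivAt (fun w : ℝ => 1 + w) 1 v := by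
      simpa using (hasDerivAt_id' v).const_add (1:ℝ)
    have := h4.fun_sub h3
    refine this.congr_deriv ?_
    ring
  have hmono : Monotone g := by
    apply monotone_of_deriv_nonneg (fun v => (hd v).differentiableAt)
    intro v
    rw [(hd v).deriv]
    have h1 : (-(2 * v)) + 1 ≤ Real.exp (-(2 * v)) := Real.add_one_le_exp _
    have h2 : Real.exp (-(2 * v)) * Real.exp (2 * v) = 1 := by
      rw [← Real.exp_add]; simp
    nlinarith [Real.exp_pos (2 * v)]
  have h0 : g 0 = 0 := by simp [hg]
  have := hmono hu
  rw [h0] at this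
  simp only [hg] at this
  linarith

private lemma reflect_ineq (k : ℕ) (s : ℝ) (h0 : 0 ≤ s) (hs : s ≤ (k : ℝ)) :
    Real.exp (-((k : ℝ) - s)) * ((k : ℝ) - s) ^ k
      ≤ Real.exp (-((k : ℝ) + s)) * ((k : ℝ) + s) ^ k := by
  rcases Nat.eq_zero_or_pos k with hk | hk
  · subst hk
    have : s = 0 := le_antisymm (by exact_mod_cast hs) h0
    simp [this]
  have hm : (0 : ℝ) < (k : ℝ) := by exact_mod_cast hk
  set m : ℝ := (k : ℝ) with hmdef
  set u : ℝ := s / m with hudef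
  have hu0 : 0 ≤ u := div_nonneg h0 hm.le
  have hu1 : u ≤ 1 := (div_le_one hm).2 hs
  have hmne : m ≠ 0 := hm.ne'
  have hms : m - s = m * (1 - u) := by rw [hudef]; field_simp
  have hps : m + s = m * (1 + u) := by rw [hudef]; field_simp
  have hexp : Real.exp (2 * s) = Real.exp (2 * u) ^ k := by
    rw [← Real.exp_nat_mul]
    congr 1
    rw [hudef, hmdef]
    field_simp
  have key : Real.exp (2 * s) * (m - s) ^ k ≤ (m + s) ^ k := by
    rw [hexp, hms, hps, ← mul_pow]
    apply pow_le_pow_left₀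
    · exact mul_nonneg (Real.exp_pos _).le (mul_nonneg hm.le (by linarith))
    have hc := core_ineq u hu0
    nlinarith [Real.exp_pos (2 * u)]
  have hrw : Real.exp (-(m - s)) = Real.exp (-(m + s)) * Real.exp (2 * s) := by
    rw [← Real.exp_add]; ring_nf
  calc Real.exp (-(m - s)) * (m - s) ^ k
      = Real.exp (-(m + s)) * (Real.exp (2 * s) * (m - s) ^ k) := by rw [hrw]; ring
    _ ≤ Real.exp (-(m + s)) * (m + s) ^ k := by
        apply mul_le_mul_of_nonneg_left key (Real.exp_pos _).le

private lemma f_anti (k : ℕ) {a b : ℝ} (ha : (k : ℝ) ≤ a) (hab : a ≤ b) :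
    Real.exp (-b) * b ^ k ≤ Real.exp (-a) * a ^ k := by
  rcases eq_or_lt_of_le (le_trans (Nat.cast_nonneg k) ha) with h0 | h0
  · -- a = 0, so k = 0
    have hk : (k : ℝ) = 0 := le_antisymm (h0 ▸ ha) (Nat.cast_nonneg k)
    have : k = 0 := by exact_mod_cast hk
    subst this
    simp only [pow_zero, mul_one]
    exact Real.exp_le_exp.2 (by linarith)
  · have hb : 0 < b := lt_of_lt_of_le h0 hab
    have hlog : Real.log (b / a) ≤ b / a - 1 := Real.log_le_sub_one_of_pos (by positivity)
    have hlogd : Real.log (b / a) = Real.log b - Real.log a := Real.log_div hb.ne' h0.ne'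
    have hkey : (k : ℝ) * Real.log b - b ≤ (k : ℝ) * Real.log a - a := by
      have h1 : (k : ℝ) * (Real.log b - Real.log a) ≤ (k : ℝ) * ((b - a) / a) := by
        apply mul_le_mul_of_nonneg_left _ (Nat.cast_nonneg k)
        rw [← hlogd]
        have : b / a - 1 = (b - a) / a := by field_simp
        linarith [this ▸ hlog]
      have h2 : (k : ℝ) * ((b - a) / a) ≤ b - a := by
        rw [mul_div_assoc'] at *
        apply div_le_of_le_mul₀ h0.le (by linarith)
        nlinarith
      linarith
    have hb' : b ^ k = Real.exp ((k : ℝ) * Real.log b) := by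
      rw [Real.exp_nat_mul, Real.exp_log hb]
    have ha' : a ^ k = Real.exp ((k : ℝ) * Real.log a) := by
      rw [Real.exp_nat_mul, Real.exp_log h0]
    rw [hb', ha', ← Real.exp_add, ← Real.exp_add]
    exact Real.exp_le_exp.2 (by linarith)

private lemma f_integrableOn (k : ℕ) : IntegrableOn
    (fun t : ℝ => Real.exp (-t) * t ^ k) (Ioi 0) := by
  have := Real.GammaIntegral_convergent (s := (k : ℝ) + 1) (by positivity)
  apply this.congr_fun _ measurableSet_Ioi
  intro t ht
  simp [Real.rpow_natCast]

private lemma f_total (k : ℕ) :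
    ∫ t in Ioi (0:ℝ), Real.exp (-t) * t ^ k = (Nat.factorial k : ℝ) := by
  have h1 := Real.Gamma_eq_integral (s := (k : ℝ) + 1) (by positivity)
  have h2 : Real.Gamma ((k : ℝ) + 1) = Nat.factorial k := by
    exact_mod_cast Real.Gamma_nat_eq_factorial k
  rw [← h2, h1]
  apply setIntegral_congr_fun measurableSet_Ioi
  intro t ht
  simp [Real.rpow_natCast]

private lemma f_cont (k : ℕ) : Continuous (fun t : ℝ => Real.exp (-t) * t ^ k) :=
  (Real.continuous_exp.comp continuous_neg).mul (continuous_pow k)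

private lemma f_split (k : ℕ) {a : ℝ} (ha : 0 ≤ a) :
    (∫ t in (0:ℝ)..a, Real.exp (-t) * t ^ k)
      + ∫ t in Ioi a, Real.exp (-t) * t ^ k = (Nat.factorial k : ℝ) := by
  rw [intervalIntegral.integral_of_le ha, ← f_total k]
  rw [← setIntegral_union (Ioc_disjoint_Ioi le_rfl) measurableSet_Ioi
      ((f_integrableOn k).mono_set Ioc_subset_Ioi_self)
      ((f_integrableOn k).mono_set (Ioi_subset_Ioi ha)),
    Ioc_union_Ioi_eq_Ioi ha]

private lemma f_median (k : ℕ) :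
    ∫ t in (0:ℝ)..(k:ℝ), Real.exp (-t) * t ^ k
      ≤ (1 / 2 : ℝ) * (Nat.factorial k : ℝ) := by
  set f : ℝ → ℝ := fun t => Real.exp (-t) * t ^ k with hf
  have h1 : (∫ t in (0:ℝ)..(k:ℝ), f t) = ∫ t in (k:ℝ)..(2*(k:ℝ)), f (2*(k:ℝ) - t) := by
    rw [intervalIntegral.integral_comp_sub_left f (2*(k:ℝ))]
    have e1 : 2*(k:ℝ) - 2*(k:ℝ) = 0 := by ring
    have e2 : 2*(k:ℝ) - (k:ℝ) = (k:ℝ) := by ring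
    rw [e1, e2]
  have h2 : (∫ t in (k:ℝ)..(2*(k:ℝ)), f (2*(k:ℝ) - t)) ≤ ∫ t in (k:ℝ)..(2*(k:ℝ)), f t := by
    apply intervalIntegral.integral_mono_on (by linarith [(Nat.cast_nonneg k : (0:ℝ) ≤ k)])
    · exact ((f_cont k).comp (by continuity)).intervalIntegrable _ _
    · exact (f_cont k).intervalIntegrable _ _
    intro t ht
    obtain ⟨ht1, ht2⟩ := ht
    have := reflect_ineq k (t - (k:ℝ)) (by linarith) (by linarith)
    simp only [hf]
    have e1 : (k:ℝ) - (t - (k:ℝ)) = 2*(k:ℝ) - t := by ring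
    have e2 : (k:ℝ) + (t - (k:ℝ)) = t := by ring
    rwa [e1, e2] at this
  have h3 : (∫ t in (k:ℝ)..(2*(k:ℝ)), f t) ≤ ∫ t in Ioi (k:ℝ), f t := by
    rw [intervalIntegral.integral_of_le (by linarith [(Nat.cast_nonneg k : (0:ℝ) ≤ k)])]
    apply setIntegral_mono_set ((f_integrableOn k).mono_set (Ioi_subset_Ioi (Nat.cast_nonneg k)))
    · filter_upwards [ae_restrict_mem measurableSet_Ioi] with t ht
      have : (0:ℝ) < t := lt_of_le_of_lt (Nat.cast_nonneg k) ht
      positivity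
    · exact HasSubset.Subset.eventuallyLE Ioc_subset_Ioi_self
  have h4 := f_split k (a := (k:ℝ)) (Nat.cast_nonneg k)
  simp only [hf] at *
  linarith

private lemma f_interval_pos (k : ℕ) {a b : ℝ} (ha : 0 ≤ a) (hab : a < b) :
    0 < ∫ t in a..b, Real.exp (-t) * t ^ k := by
  apply intervalIntegral.intervalIntegral_pos_of_pos_on
    ((f_cont k).intervalIntegrable _ _) _ hab
  intro t ht
  have : 0 < t := lt_of_le_of_lt ha ht.1
  positivity

/-- If `∫_x^∞ e^{-t}t^{n−1}dt ≤ (n−1)!/2`, `∫_0^y e^{-t}t^{n−1}dt ≥ (n−1)!/2` and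
`∫_x^∞ e^{-t}t^{n−1}dt + ∫_0^y e^{-t}t^{n−1}dt = ∫_0^z e^{-t}t^{n−1}dt` with
`x, y, z ≥ 0`, then `e^{-x}x^{n−1} + e^{-y}y^{n−1} ≥ e^{-z}z^{n−1}`. -/
theorem mixed_boundary_superadditive (n : ℕ) (hn : 1 ≤ n) (x y z : ℝ)
    (hx : 0 ≤ x) (hy : 0 ≤ y) (hz : 0 ≤ z)
    (hxle : ∫ t in Set.Ioi x, Real.exp (-t) * t ^ (n - 1)
      ≤ (1 / 2 : ℝ) * (Nat.factorial (n - 1) : ℝ))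
    (hyge : (1 / 2 : ℝ) * (Nat.factorial (n - 1) : ℝ)
      ≤ ∫ t in (0:ℝ)..y, Real.exp (-t) * t ^ (n - 1))
    (heq : (∫ t in Set.Ioi x, Real.exp (-t) * t ^ (n - 1))
        + ∫ t in (0:ℝ)..y, Real.exp (-t) * t ^ (n - 1)
      = ∫ t in (0:ℝ)..z, Real.exp (-t) * t ^ (n - 1)) :
    Real.exp (-z) * z ^ (n - 1)
      ≤ Real.exp (-x) * x ^ (n - 1) + Real.exp (-y) * y ^ (n - 1) := by
  set k : ℕ := n - 1 with hk
  have hA : 0 ≤ ∫ t in Set.Ioi x, Real.exp (-t) * t ^ k := by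
    apply setIntegral_nonneg measurableSet_Ioi
    intro t ht
    have h0t : (0:ℝ) ≤ t := le_of_lt (lt_of_le_of_lt hx ht)
    positivity
  -- y ≥ k
  have hyk : (k : ℝ) ≤ y := by
    by_contra hcon
    push_neg at hcon
    have hsplit : (∫ t in (0:ℝ)..y, Real.exp (-t) * t ^ k)
        + ∫ t in y..(k:ℝ), Real.exp (-t) * t ^ k
        = ∫ t in (0:ℝ)..(k:ℝ), Real.exp (-t) * t ^ k :=
      intervalIntegral.integral_add_adjacent_intervals
        ((f_cont k).intervalIntegrable _ _) ((f_cont k).intervalIntegrable _ _)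
    have hpos := f_interval_pos k hy hcon
    have := f_median k
    linarith
  -- z ≥ y
  have hzy : y ≤ z := by
    by_contra hcon
    push_neg at hcon
    have hsplit : (∫ t in (0:ℝ)..z, Real.exp (-t) * t ^ k)
        + ∫ t in z..y, Real.exp (-t) * t ^ k
        = ∫ t in (0:ℝ)..y, Real.exp (-t) * t ^ k :=
      intervalIntegral.integral_add_adjacent_intervals
        ((f_cont k).intervalIntegrable _ _) ((f_cont k).intervalIntegrable _ _)
    have hpos := f_interval_pos k hz hcon
    linarith
  have h1 : Real.exp (-z) * z ^ k ≤ Real.exp (-y) * y ^ k := f_anti k hyk hzy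
  have h2 : 0 ≤ Real.exp (-x) * x ^ k := by positivity
  linarith
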